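/- Let g be a finite-dimensional graded simple Lie algebra of depth 2, g = g₋₂ + g₋₁ + g₀ + g₁ + g₂, with nondegenerate invariant Killing form. If g = g' ⊕ g'' is a direct sum of semisimple ideals with g''₋₂ = 0, and the Killing-form pairing between g_p and g₋p is nondegenerate for each p, then g''₂ = 0, g''₋₁ = g''₁ = 0, and if moreover the gradation is transitive ([X, g₋₁] = 0 for X ∈ g₀ implies X = 0), then g'' = 0. -/

import Mathlib

/-- let `L` be a finite-dimensional graded Lie algebra of depth 2,
`L = g₋₂ + g₋₁ + g₀ + g₁ + g₂`, in which the Killing form pairs `g p` with `g (-p)`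
nondegenerately, the bracket `g₋₁ × g₋₁ → g₋₂` is nondegenerate, and suppose
`L = I' ⊕ I''` is a direct sum of graded semisimple ideals with `I'' ⊓ g₋₂ = 0`.
Then `I'' ⊓ g₂ = 0`, `I'' ⊓ g₋₁ = I'' ⊓ g₁ = 0`, and if moreover the gradation is
transitive then `I'' = 0`. -/
theorem summand_vanishes
    {K : Type*} [Field K] [CharZero K]
    {L : Type*} [LieRing L] [LieAlgebra K L] [FiniteDimensional K L]
    (g : ℤ → Submodule K L)
    (hdepth : ∀ i : ℤ, (i < -2 ∨ 2 < i) → g i = ⊥)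
    (hbracket : ∀ i j : ℤ, ∀ x ∈ g i, ∀ y ∈ g j, ⁅x, y⁆ ∈ g (i + j))
    (hindep : iSupIndep g)
    (htop : ⨆ i, g i = ⊤)
    (hkilling : ∀ p : ℤ, ∀ x ∈ g p,
      (∀ y ∈ g (-p), killingForm K L x y = 0) → x = 0)
    (hlevi : ∀ y ∈ g (-1 : ℤ), (∀ z ∈ g (-1 : ℤ), ⁅y, z⁆ = 0) → y = 0)
    (I' I'' : LieIdeal K L)
    (hsup : (I' : Submodule K L) ⊔ (I'' : Submodule K L) = ⊤)
    (hdisj : (I' : Submodule K L) ⊓ (I'' : Submodule K L) = ⊥)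
    (hss' : LieAlgebra.IsSemisimple K I')
    (hss'' : LieAlgebra.IsSemisimple K I'')
    (hgr' : (I' : Submodule K L) = ⨆ p : ℤ, ((I' : Submodule K L) ⊓ g p))
    (hgr'' : (I'' : Submodule K L) = ⨆ p : ℤ, ((I'' : Submodule K L) ⊓ g p))
    (hm2 : (I'' : Submodule K L) ⊓ g (-2 : ℤ) = ⊥) :
    ((I'' : Submodule K L) ⊓ g (2 : ℤ) = ⊥) ∧
    ((I'' : Submodule K L) ⊓ g (-1 : ℤ) = ⊥) ∧
    ((I'' : Submodule K L) ⊓ g (1 : ℤ) = ⊥) ∧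
    ((∀ p : ℤ, 0 ≤ p → ∀ x ∈ g p, (∀ y ∈ g (-1 : ℤ), ⁅x, y⁆ = 0) → x = 0) →
      I'' = ⊥) := by
  classical
  have internal : DirectSum.IsInternal g :=
    (DirectSum.isInternal_submodule_iff_iSupIndep_and_iSup_eq_top g).mpr ⟨hindep, htop⟩
  letI : DirectSum.Decomposition g := internal.chooseDecomposition
  set π : ℤ → L →ₗ[K] L := fun p =>
    (g p).subtype ∘ₗ (DirectSum.component K ℤ _ p) ∘ₗ
      (DirectSum.decomposeLinearEquiv g).toLinearMap with hπdef
  have hπ_apply : ∀ (p : ℤ) (x : L), π p x = ((DirectSum.decompose g x) p : L) := by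
    intro p x; rfl
  have hπ_same : ∀ p : ℤ, ∀ x ∈ g p, π p x = x := by
    intro p x hx; rw [hπ_apply]; exact DirectSum.decompose_of_mem_same g hx
  have hπ_ne : ∀ p q : ℤ, p ≠ q → ∀ x ∈ g p, π q x = 0 := by
    intro p q hpq x hx; rw [hπ_apply]
    exact DirectSum.decompose_of_mem_ne g hx hpq
  -- projections preserve graded ideals
  have hproj : ∀ (I : LieIdeal K L),
      (I : Submodule K L) = (⨆ p : ℤ, ((I : Submodule K L) ⊓ g p)) →
      ∀ p : ℤ, ∀ x ∈ (I : Submodule K L), π p x ∈ (I : Submodule K L) ⊓ g p := by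
    intro I hI p x hx
    have hmem : x ∈ ⨆ q : ℤ, ((I : Submodule K L) ⊓ g q) := hI ▸ hx
    have hle : Submodule.map (π p) (⨆ q : ℤ, ((I : Submodule K L) ⊓ g q)) ≤
        (I : Submodule K L) ⊓ g p := by
      rw [Submodule.map_iSup]
      apply iSup_le; intro q
      rintro _ ⟨y, hy, rfl⟩
      rcases eq_or_ne q p with h | h
      · subst h; rw [hπ_same q y hy.2]; exact hy
      · rw [hπ_ne q p h y hy.2]; exact ⟨zero_mem _, zero_mem _⟩
    exact hle ⟨x, hmem, rfl⟩
  -- graded pieces split across the two ideals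
  have hsplit : ∀ p : ℤ, ∀ y ∈ g p, ∃ a ∈ (I' : Submodule K L) ⊓ g p,
      ∃ b ∈ (I'' : Submodule K L) ⊓ g p, y = a + b := by
    intro p y hy
    have hytop : y ∈ (I' : Submodule K L) ⊔ (I'' : Submodule K L) := by
      rw [hsup]; exact Submodule.mem_top
    obtain ⟨a, ha, b, hb, rfl⟩ := Submodule.mem_sup.mp hytop
    refine ⟨π p a, hproj I' hgr' p a ha, π p b, hproj I'' hgr'' p b hb, ?_⟩
    rw [← map_add, hπ_same p _ hy]
  have hsub : ∀ p : ℤ, (I'' : Submodule K L) ⊓ g p = ⊥ → g p ≤ (I' : Submodule K L) := by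
    intro p h y hy
    obtain ⟨a, ha, b, hb, rfl⟩ := hsplit p y hy
    rw [h] at hb
    simp only [Submodule.mem_bot] at hb
    rw [hb, add_zero]
    exact ha.1
  -- Killing orthogonality of the two ideals
  have horth : ∀ x ∈ (I'' : Submodule K L), ∀ y ∈ (I' : Submodule K L),
      killingForm K L x y = 0 := by
    intro x hx y hy
    have hcomp : (LieAlgebra.ad K L x) ∘ₗ (LieAlgebra.ad K L y) = 0 := by
      ext z
      simp only [LinearMap.comp_apply, LieAlgebra.ad_apply, LinearMap.zero_apply]
      have hy' : y ∈ I' := hy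
      have h1 : ⁅y, z⁆ ∈ I' := by
        have : ⁅z, y⁆ ∈ I' := I'.lie_mem hy'
        have h' : ⁅y, z⁆ = -⁅z, y⁆ := by rw [← lie_skew]
        rw [h']; exact neg_mem this
      have hx' : x ∈ I'' := hx
      have h2 : ⁅x, ⁅y, z⁆⁆ ∈ (I' : Submodule K L) ⊓ (I'' : Submodule K L) := by
        constructor
        · exact I'.lie_mem h1
        · have : ⁅⁅y, z⁆, x⁆ ∈ I'' := I''.lie_mem hx'
          have h' : ⁅x, ⁅y, z⁆⁆ = -⁅⁅y, z⁆, x⁆ := by rw [← lie_skew]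
          show ⁅x, ⁅y, z⁆⁆ ∈ I''
          rw [h']; exact neg_mem this
      rw [hdisj] at h2
      simpa using h2
    rw [killingForm_apply_apply, hcomp, map_zero]
  -- the four conclusions
  have h2 : (I'' : Submodule K L) ⊓ g (2 : ℤ) = ⊥ := by
    rw [eq_bot_iff]
    rintro x ⟨hxI, hxg⟩
    have : x = 0 := by
      apply hkilling 2 x hxg
      intro y hy
      exact horth x hxI y (hsub (-2) hm2 hy)
    simpa using this
  have hm1 : (I'' : Submodule K L) ⊓ g (-1 : ℤ) = ⊥ := by
    rw [eq_bot_iff]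
    rintro y ⟨hyI, hyg⟩
    have : y = 0 := by
      apply hlevi y hyg
      intro z hz
      have hb : ⁅y, z⁆ ∈ g (-2 : ℤ) := by
        have := hbracket (-1) (-1) y hyg z hz
        norm_num at this
        exact this
      have hi : ⁅y, z⁆ ∈ (I'' : Submodule K L) := by
        have hy' : y ∈ I'' := hyI
        have h' : ⁅z, y⁆ ∈ I'' := I''.lie_mem hy'
        have heq : ⁅y, z⁆ = -⁅z, y⁆ := by rw [← lie_skew]
        show ⁅y, z⁆ ∈ I''
        rw [heq]; exact neg_mem h'
      have : ⁅y, z⁆ ∈ (I'' : Submodule K L) ⊓ g (-2 : ℤ) := ⟨hi, hb⟩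
      rw [hm2] at this
      simpa using this
    simpa using this
  have h1 : (I'' : Submodule K L) ⊓ g (1 : ℤ) = ⊥ := by
    rw [eq_bot_iff]
    rintro x ⟨hxI, hxg⟩
    have : x = 0 := by
      apply hkilling 1 x hxg
      intro y hy
      exact horth x hxI y (hsub (-1) hm1 hy)
    simpa using this
  refine ⟨h2, hm1, h1, ?_⟩
  intro htrans
  have h0 : (I'' : Submodule K L) ⊓ g (0 : ℤ) = ⊥ := by
    rw [eq_bot_iff]
    rintro x ⟨hxI, hxg⟩
    have : x = 0 := by
      apply htrans 0 le_rfl x hxg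
      intro y hy
      have hb : ⁅x, y⁆ ∈ g (-1 : ℤ) := by
        have := hbracket 0 (-1) x hxg y hy
        norm_num at this
        exact this
      have hi : ⁅x, y⁆ ∈ (I'' : Submodule K L) := by
        have hx' : x ∈ I'' := hxI
        have h' : ⁅y, x⁆ ∈ I'' := I''.lie_mem hx'
        have heq : ⁅x, y⁆ = -⁅y, x⁆ := by rw [← lie_skew]
        show ⁅x, y⁆ ∈ I''
        rw [heq]; exact neg_mem h'
      have : ⁅x, y⁆ ∈ (I'' : Submodule K L) ⊓ g (-1 : ℤ) := ⟨hi, hb⟩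
      rw [hm1] at this
      simpa using this
    simpa using this
  have hall : ∀ p : ℤ, (I'' : Submodule K L) ⊓ g p = ⊥ := by
    intro p
    by_cases hp : p < -2 ∨ 2 < p
    · rw [hdepth p hp]; exact inf_bot_eq _
    · push_neg at hp
      obtain ⟨hp1, hp2⟩ := hp
      interval_cases p
      · exact hm2
      · exact hm1
      · exact h0
      · exact h1
      · exact h2
  have hbot : (I'' : Submodule K L) = ⊥ := by
    rw [hgr'']
    simp only [iSup_eq_bot]
    exact hall
  exact (LieSubmodule.toSubmodule_eq_bot (N := I'')).mp hbot
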